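/- Let U_i : H → H be ρ_i-strongly quasi-nonexpansive (ρ_i ≥ 0), i = 1,…,m, with a common fixed point, let ω_i ≥ 0 sum to 1, and let U := Σ ω_i U_i. Then for any z ∈ ⋂_i Fix U_i, any x ∈ H, and any R > 0 with R ≥ ‖x − z‖, we have (1/(2R)) Σ_{i=1}^m ω_i ρ_i ‖U_i x − x‖² ≤ ‖Ux − x‖. -/

import Mathlib

theorem convex_combination_sqne_residual_bound
    {H : Type*} [NormedAddCommGroup H] [InnerProductSpace ℝ H]
    (m : ℕ) (U : Fin m → H → H) (ρ : Fin m → ℝ) (ω : Fin m → ℝ)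
    (hρ : ∀ i, 0 ≤ ρ i)
    (hsqne : ∀ i, ∀ x : H, ∀ z ∈ {y : H | U i y = y},
      ‖U i x - z‖ ^ 2 ≤ ‖x - z‖ ^ 2 - ρ i * ‖U i x - x‖ ^ 2)
    (hcommon : (⋂ i, {y : H | U i y = y}).Nonempty)
    (hω : ∀ i, 0 ≤ ω i) (hωsum : ∑ i, ω i = 1)
    (Uc : H → H) (hUc : ∀ x : H, Uc x = ∑ i, ω i • U i x) :
    ∀ z ∈ ⋂ i, {y : H | U i y = y}, ∀ x : H, ∀ R : ℝ, 0 < R → ‖x - z‖ ≤ R →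
      (1 / (2 * R)) * ∑ i, ω i * ρ i * ‖U i x - x‖ ^ 2 ≤ ‖Uc x - x‖ := by
  intro z hz x R hR hxz
  have hzi : ∀ i, z ∈ {y : H | U i y = y} := by
    intro i; exact Set.mem_iInter.mp hz i
  -- per-term bound: ω i * ρ i * ‖d_i‖² ≤ ω i * (2⟪d_i, z - x⟫)
  have hterm : ∀ i, ω i * ρ i * ‖U i x - x‖ ^ 2 ≤
      ω i * (2 * inner ℝ (U i x - x) (z - x) : ℝ) := by
    intro i
    have h1 := hsqne i x z (hzi i)
    have hid : ‖U i x - z‖ ^ 2 =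
        ‖U i x - x‖ ^ 2 + 2 * inner ℝ (U i x - x) (x - z) + ‖x - z‖ ^ 2 := by
      have := @norm_add_sq_real H _ _ (U i x - x) (x - z)
      have hs : (U i x - x) + (x - z) = U i x - z := by abel
      rw [hs] at this
      linarith [this]
    have hinner : (inner ℝ (U i x - x) (x - z) : ℝ) = - inner ℝ (U i x - x) (z - x) := by
      rw [← inner_neg_right]; congr 1; abel
    have hd2 : (0:ℝ) ≤ ‖U i x - x‖ ^ 2 := by positivity
    have key : ρ i * ‖U i x - x‖ ^ 2 ≤ 2 * inner ℝ (U i x - x) (z - x) := by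
      rw [hid, hinner] at h1; linarith
    rw [mul_assoc]
    exact mul_le_mul_of_nonneg_left key (hω i)
  have hsum : ∑ i, ω i * ρ i * ‖U i x - x‖ ^ 2 ≤
      ∑ i, ω i * (2 * inner ℝ (U i x - x) (z - x) : ℝ) :=
    Finset.sum_le_sum fun i _ => hterm i
  -- rewrite RHS as 2⟪Uc x - x, z - x⟫
  have hUcx : Uc x - x = ∑ i, ω i • (U i x - x) := by
    rw [hUc x]
    simp only [smul_sub, Finset.sum_sub_distrib, ← Finset.sum_smul, hωsum, one_smul]
  have hinner_sum : (inner ℝ (Uc x - x) (z - x) : ℝ) =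
      ∑ i, ω i * inner ℝ (U i x - x) (z - x) := by
    rw [hUcx, sum_inner]
    simp [real_inner_smul_left]
  have hrhs : ∑ i, ω i * (2 * inner ℝ (U i x - x) (z - x) : ℝ) =
      2 * inner ℝ (Uc x - x) (z - x) := by
    rw [hinner_sum, Finset.mul_sum]
    congr 1; ext i; ring
  have hcs : (inner ℝ (Uc x - x) (z - x) : ℝ) ≤ ‖Uc x - x‖ * R := by
    calc (inner ℝ (Uc x - x) (z - x) : ℝ) ≤ ‖Uc x - x‖ * ‖z - x‖ :=
          real_inner_le_norm _ _
      _ ≤ ‖Uc x - x‖ * R := by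
          apply mul_le_mul_of_nonneg_left _ (norm_nonneg _)
          rw [show z - x = -(x - z) by abel, norm_neg]; exact hxz
  have final : ∑ i, ω i * ρ i * ‖U i x - x‖ ^ 2 ≤ 2 * R * ‖Uc x - x‖ := by
    rw [hrhs] at hsum; nlinarith
  rw [one_div, inv_mul_le_iff₀ (by positivity)]
  linarith
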